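/- Let 𝒢 be a TVG in class R whose underlying graph is the path v_0 v_1 … v_n, with an agent starting at v_k at time 0. Then there exists an optimal solution to DMVP whose underlying walk is either v_k v_{k−1} … v_0 v_1 … v_n (first proceed monotonically to v_0, then monotonically to v_n) or v_k v_{k+1} … v_n v_{n−1} … v_0 (first proceed monotonically to v_n, then monotonically to v_0); when k = 0 or k = n this is the single monotone traversal of the path. -/

import Mathlib

/-- A time-varying graph (TVG): an underlying simple graph together with a presence
function telling when each (directed rendering of an) edge is available; every edge
takes one time step to cross. -/
structure TVG (V : Type) where
  G : SimpleGraph V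
  avail : V → V → ℕ → Prop

namespace TVG

variable {V : Type}

/-- A step of a journey: traverse the edge from `x.1` to `x.2.1`, starting at time
`x.2.2` and arriving at time `x.2.2 + 1`. -/
abbrev Step (V : Type) := V × V × ℕ

/-- Consecutive steps of a journey: the next step starts where the previous one ended,
at a strictly later time (waiting in between is allowed). -/
def Linked (a b : Step V) : Prop := b.1 = a.2.1 ∧ a.2.2 + 1 ≤ b.2.2

/-- A journey: each step crosses an edge of the underlying graph that is available at
that time, and consecutive steps are linked. -/
def IsJourney (𝒢 : TVG V) (J : List (Step V)) : Prop :=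
  (∀ x ∈ J, 𝒢.G.Adj x.1 x.2.1 ∧ 𝒢.avail x.1 x.2.1 x.2.2) ∧ J.Chain' Linked

/-- The journey starts at vertex `u`. -/
def startsAt (J : List (Step V)) (u : V) : Prop := ∀ x ∈ J.head?, x.1 = u

/-- The journey departs at or after time `t`. -/
def departsAfter (J : List (Step V)) (t : ℕ) : Prop := ∀ x ∈ J.head?, t ≤ x.2.2

/-- Departure date of a journey started at time `t0`. -/
def departure (J : List (Step V)) (t0 : ℕ) : ℕ := (J.head?).elim t0 fun x => x.2.2

/-- Arrival date of a journey started at time `t0`. -/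
def arrival (J : List (Step V)) (t0 : ℕ) : ℕ := (J.getLast?).elim t0 fun x => x.2.2 + 1

/-- Final vertex of a journey started at vertex `s`. -/
def endAt (J : List (Step V)) (s : V) : V := (J.getLast?).elim s fun x => x.2.1

/-- The journey, started at `s`, visits (covers) vertex `v`. -/
def visits (J : List (Step V)) (s v : V) : Prop := v = s ∨ ∃ x ∈ J, x.2.1 = v

/-- A covering journey from `s` starting at time `0`: a journey that starts at `s`
and visits every vertex. -/
def IsCoveringFrom (𝒢 : TVG V) (J : List (Step V)) (s : V) : Prop :=
  𝒢.IsJourney J ∧ startsAt J s ∧ ∀ v : V, visits J s v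

/-- Class `R` (recurrent edges): connected underlying graph, lifetime `ℕ`, and every
edge is available at arbitrarily late times. -/
def ClassR (𝒢 : TVG V) : Prop :=
  𝒢.G.Connected ∧ ∀ u v, 𝒢.G.Adj u v → ∀ t, ∃ t', t < t' ∧ 𝒢.avail u v t'

/-- Class `B` (time-bounded recurrent edges): every edge is available at some time in
`[t, t + Δ)` for every `t`. -/
def ClassB (𝒢 : TVG V) (Δ : ℕ) : Prop :=
  𝒢.G.Connected ∧ ∀ u v, 𝒢.G.Adj u v → ∀ t, ∃ t', t ≤ t' ∧ t' < t + Δ ∧ 𝒢.avail u v t'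

/-- Class `P` (periodic edges): the presence function is periodic with period `p`. -/
def ClassP (𝒢 : TVG V) (p : ℕ) : Prop :=
  𝒢.G.Connected ∧ ∀ u v t, 𝒢.avail u v t ↔ 𝒢.avail u v (t + p)

/-- Presence function obtained by running the given (possibly time-dependent) edge
relations for the given durations, one block after another, starting at time `0`;
each block relation receives the local time within its block. -/
def schedAvail : List ((V → V → ℕ → Prop) × ℕ) → V → V → ℕ → Prop
  | [], _, _, _ => False
  | (r, d) :: rest, u, v, t => if t < d then r u v t else schedAvail rest u v (t - d)

end TVG

open TVG

/-- The vertex sequence of the underlying walk of a journey started at `s`. -/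
def vertSeq {V : Type} (J : List (TVG.Step V)) (s : V) : List V :=
  s :: J.map fun x => x.2.1

open Fin.NatCast in
/-- The walk `v_k, v_{k-1}, …, v_0, v_1, …, v_n`: first proceed monotonically to `v_0`,
then monotonically to `v_n`. -/
def leftFirst (n k : ℕ) : List (Fin (n + 1)) :=
  ((List.range (k + 1)).reverse ++ (List.range n).map (· + 1)).map
    fun i => ((i : ℕ) : Fin (n + 1))

open Fin.NatCast in
/-- The walk `v_k, v_{k+1}, …, v_n, v_{n-1}, …, v_0`: first proceed monotonically to
`v_n`, then monotonically to `v_0`. -/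
def rightFirst (n k : ℕ) : List (Fin (n + 1)) :=
  ((List.range (n - k + 1)).map (· + k) ++ (List.range n).reverse).map
    fun i => ((i : ℕ) : Fin (n + 1))

section AuxProofs
namespace Aux
open TVG List

variable {V : Type}

/-! ### Basic journey lemmas -/

lemma arrival_cons (x : Step V) (L : List (Step V)) (t : ℕ) :
    arrival (x :: L) t = arrival L (x.2.2 + 1) := by
  cases L with
  | nil => simp [arrival]
  | cons b L =>
    obtain ⟨z, hz⟩ := Option.isSome_iff_exists.mp
      ((List.getLast?_isSome (l := b :: L)).mpr (by simp))
    simp [arrival, List.getLast?_cons_cons, hz]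

lemma arrival_indep {L : List (Step V)} (h : L ≠ []) (t t' : ℕ) :
    arrival L t = arrival L t' := by
  rcases List.eq_nil_or_concat L with rfl | ⟨P, z, rfl⟩
  · exact absurd rfl h
  · simp [arrival, List.concat_eq_append, List.getLast?_concat]

lemma arrival_concat (P : List (Step V)) (z : Step V) (t : ℕ) :
    arrival (P ++ [z]) t = z.2.2 + 1 := by
  simp [arrival, List.getLast?_concat]

lemma step_le_arrival {J : List (Step V)} (hc : J.Chain' Linked) {x : Step V}
    (hx : x ∈ J) (t : ℕ) : x.2.2 + 1 ≤ arrival J t := by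
  have hc' : J.Chain' (fun a b : Step V => a.2.2 < b.2.2) :=
    hc.imp (fun a b h => Nat.lt_of_succ_le h.2)
  haveI : IsTrans (Step V) (fun a b : Step V => a.2.2 < b.2.2) :=
    ⟨fun _ _ _ => Nat.lt_trans⟩
  have hp := List.isChain_iff_pairwise.mp hc'
  rcases List.eq_nil_or_concat J with rfl | ⟨P, z, rfl⟩
  · simp at hx
  · rw [List.concat_eq_append] at *
    rw [arrival_concat]
    rcases List.mem_append.mp hx with hxP | hxz
    · have := (List.pairwise_append.mp hp).2.2 x hxP z (by simp)
      omega
    · simp at hxz; subst hxz; omega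

lemma le_arrival {𝒢 : TVG V} {J : List (Step V)} (hJ : 𝒢.IsJourney J) {t : ℕ}
    (hd : departsAfter J t) : t ≤ arrival J t := by
  cases J with
  | nil => simp [arrival]
  | cons x L =>
    have h1 : t ≤ x.2.2 := hd x (by simp [List.head?])
    have h2 := step_le_arrival hJ.2 List.mem_cons_self t
    omega

lemma journey_of_infix {𝒢 : TVG V} {J J' : List (Step V)} (hJ : 𝒢.IsJourney J)
    (h : J' <:+: J) : 𝒢.IsJourney J' :=
  ⟨fun x hx => hJ.1 x (h.subset hx), hJ.2.infix h⟩

lemma startsAt_prefix {J : List (Step V)} {A B : List (Step V)} {u : V}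
    (hJ : J = A ++ B) (hA : A ≠ []) (h : startsAt J u) : startsAt A u := by
  subst hJ
  intro x hx
  apply h
  cases A with
  | nil => exact absurd rfl hA
  | cons a A' => simpa using hx

lemma departsAfter_prefix {J : List (Step V)} {A B : List (Step V)} {t : ℕ}
    (hJ : J = A ++ B) (hA : A ≠ []) (h : departsAfter J t) : departsAfter A t := by
  subst hJ
  intro x hx
  apply h
  cases A with
  | nil => exact absurd rfl hA
  | cons a A' => simpa using hx

lemma suffix_journey {𝒢 : TVG V} {A B : List (Step V)} {x : Step V}
    (hJ : 𝒢.IsJourney (A ++ x :: B)) :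
    𝒢.IsJourney B ∧ startsAt B x.2.1 ∧ departsAfter B (x.2.2 + 1) := by
  refine ⟨journey_of_infix hJ ⟨A ++ [x], [], by simp⟩, ?_, ?_⟩ <;>
  · intro b hb
    cases B with
    | nil => simp at hb
    | cons b' B' =>
      simp at hb; subst hb
      have hinf : [x, b'] <:+: (A ++ x :: b' :: B') := ⟨A, B', by simp⟩
      have := hJ.2.infix hinf
      rcases List.isChain_cons_cons.mp this with ⟨hl, -⟩
      first
      | exact hl.1
      | exact hl.2

/-! ### Monotone paths in ℕ -/

/-- Vertices strictly between `i` (exclusive) and `m` (inclusive), in monotone order. -/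
def pathTargets (i m : ℕ) : List ℕ :=
  if i ≤ m then (List.range (m - i)).map (· + (i + 1))
  else ((List.range (i - m)).map (· + m)).reverse

@[simp] lemma pathTargets_self (i : ℕ) : pathTargets i i = [] := by
  simp [pathTargets]

lemma mem_pathTargets {x i m : ℕ} :
    x ∈ pathTargets i m ↔ (i < m ∧ i < x ∧ x ≤ m) ∨ (m < i ∧ m ≤ x ∧ x < i) := by
  unfold pathTargets
  split <;> rename_i hc <;> simp only [List.mem_reverse, List.mem_map, List.mem_range]
  · constructor
    · rintro ⟨a, ha, rfl⟩; omega
    · intro h; exact ⟨x - (i + 1), by omega, by omega⟩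
  · constructor
    · rintro ⟨a, ha, rfl⟩; omega
    · intro h; exact ⟨x - m, by omega, by omega⟩

lemma pathTargets_ne_nil {i m : ℕ} (h : i ≠ m) : pathTargets i m ≠ [] := by
  intro hnil
  have : m ∈ pathTargets i m := mem_pathTargets.mpr (by omega)
  rw [hnil] at this; simp at this

lemma pathTargets_toward_lt {i m : ℕ} (h : i < m) :
    pathTargets i m = (i + 1) :: pathTargets (i + 1) m := by
  unfold pathTargets
  rw [if_pos (by omega), if_pos (by omega)]
  have : m - i = (m - (i + 1)) + 1 := by omega
  rw [this, List.range_succ_eq_map, List.map_cons, List.map_map]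
  refine List.cons_eq_cons.mpr ⟨by omega, List.map_congr_left fun a _ => ?_⟩
  simp only [Function.comp_apply]
  omega

lemma pathTargets_toward_gt {i m : ℕ} (h : m < i) :
    pathTargets i m = (i - 1) :: pathTargets (i - 1) m := by
  unfold pathTargets
  rw [if_neg (by omega)]
  rcases Nat.eq_or_lt_of_le (Nat.succ_le_of_lt h) with he | hl
  · have h1 : i - m = 1 := by omega
    have h2 : i - 1 = m := by omega
    rw [h1, h2, if_pos (le_refl m)]
    simp [List.range_succ]
  · rw [if_neg (by omega)]
    have : i - m = (i - 1 - m) + 1 := by omega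
    rw [this, List.range_succ, List.map_append, List.reverse_append]
    have h2 : i - 1 - m + m = i - 1 := by omega
    simp [h2]

lemma pathTargets_concat {i m : ℕ} (h : i ≠ m) :
    ∃ L, pathTargets i m = L ++ [m] := by
  unfold pathTargets
  rcases lt_or_gt_of_ne h with hl | hl
  · rw [if_pos (by omega)]
    have h1 : m - i = (m - i - 1) + 1 := by omega
    rw [h1, List.range_succ, List.map_append]
    have h2 : m - i - 1 + (i + 1) = m := by omega
    exact ⟨(List.range (m - i - 1)).map (· + (i + 1)), by simp [h2]⟩
  · rw [if_neg (by omega)]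
    have h1 : i - m = (i - m - 1) + 1 := by omega
    rw [h1, List.range_succ_eq_map, List.map_cons, List.reverse_cons]
    exact ⟨((List.range (i - m - 1)).map fun x => Nat.succ x + m).reverse,
      by simp [List.map_map, Function.comp]⟩

lemma pathTargets_lt_of_le {i m n : ℕ} (hi : i ≤ n) (hm : m ≤ n) {x : ℕ}
    (hx : x ∈ pathTargets i m) : x < n + 1 := by
  rcases mem_pathTargets.mp hx with h | h <;> omega

lemma pathTargets_chain : ∀ d i m : ℕ, (m - i) + (i - m) = d →
    List.Chain' (fun a b : ℕ => a + 1 = b ∨ b + 1 = a) (i :: pathTargets i m) := by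
  intro d
  induction d with
  | zero => intro i m h; have : i = m := by omega
            subst this; rw [pathTargets_self]; exact List.isChain_singleton i
  | succ d ih =>
    intro i m h
    rcases lt_trichotomy i m with hl | he | hg
    · rw [pathTargets_toward_lt hl]
      exact List.isChain_cons_cons.mpr ⟨Or.inl rfl, ih (i+1) m (by omega)⟩
    · omega
    · rw [pathTargets_toward_gt hg]
      refine List.isChain_cons_cons.mpr ⟨Or.inr (by omega), ih (i-1) m (by omega)⟩

/-! ### Extraction of a monotone journey -/

lemma extract {n : ℕ} {𝒢 : TVG (Fin (n + 1))}
    (hG : 𝒢.G = SimpleGraph.pathGraph (n + 1)) (m : ℕ) :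
    ∀ J : List (Step (Fin (n + 1))), ∀ (i : Fin (n + 1)) (t : ℕ),
    𝒢.IsJourney J → startsAt J i → departsAfter J t →
    (i.val = m ∨ (J ≠ [] ∧ ∀ x ∈ J.getLast?, x.2.1.val = m)) →
    ∃ J', 𝒢.IsJourney J' ∧ startsAt J' i ∧ departsAfter J' t ∧
      J'.map (fun x => x.2.1.val) = pathTargets i.val m ∧
      arrival J' t ≤ arrival J t := by
  intro J
  induction J with
  | nil =>
    intro i t hJ hs hd hm
    rcases hm with hm | ⟨hne, -⟩
    · exact ⟨[], ⟨by simp, List.isChain_nil⟩, by simp [startsAt], by simp [departsAfter],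
        by simp [hm], le_refl _⟩
    · exact absurd rfl hne
  | cons x rest ih =>
    intro i t hJ hs hd hm
    by_cases him : i.val = m
    · refine ⟨[], ⟨by simp, List.isChain_nil⟩, by simp [startsAt], by simp [departsAfter],
        by simp [him], ?_⟩
      simpa [arrival] using le_arrival hJ hd
    -- basic facts about the first step
    have hx1 : x.1 = i := hs x rfl
    have htx : t ≤ x.2.2 := hd x rfl
    have hadj := hJ.1 x List.mem_cons_self
    have hpath : x.1.val + 1 = x.2.1.val ∨ x.2.1.val + 1 = x.1.val := by
      rw [hG] at hadj
      exact (SimpleGraph.pathGraph_adj).mp hadj.1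
    rw [hx1] at hpath
    have hchain := List.isChain_cons.mp hJ.2
    have hJr : 𝒢.IsJourney rest :=
      ⟨fun y hy => hJ.1 y (List.mem_cons_of_mem x hy), hchain.2⟩
    have hsr : startsAt rest x.2.1 := fun y hy => (hchain.1 y hy).1
    have hdr : departsAfter rest (x.2.2 + 1) := fun y hy => (hchain.1 y hy).2
    have hmr : ∀ y ∈ rest.getLast?, y.2.1.val = m := by
      rcases Or.resolve_left hm him with ⟨-, hlast⟩
      intro y hy
      apply hlast
      cases rest with
      | nil => simp at hy
      | cons r rest' => rw [List.getLast?_cons_cons]; exact hy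
    set j := x.2.1 with hj
    have htoward_or : (i.val < m ∧ j.val = i.val + 1) ∨ (m < i.val ∧ j.val + 1 = i.val)
        ∨ (i.val < m ∧ j.val + 1 = i.val) ∨ (m < i.val ∧ j.val = i.val + 1) := by
      rcases Nat.lt_or_ge i.val m with h1 | h1 <;> rcases hpath with h2 | h2 <;>
        first
          | (left; omega)
          | (right; left; omega)
          | (right; right; left; omega)
          | (right; right; right; omega)
    have hrest_ne : j.val ≠ m → rest ≠ [] := by
      intro hjm hnil
      subst hnil
      exact hjm ((Or.resolve_left hm him).2 x rfl)
    rcases htoward_or with htw | htw | haw | haw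
    case _ | _ =>
      -- toward m
      have hexp : pathTargets i.val m = j.val :: pathTargets j.val m := by
        obtain ⟨h1, h2⟩ := htw
        rcases Nat.lt_or_ge i.val m with hl | hl
        · have hji : j.val = i.val + 1 := by omega
          rw [pathTargets_toward_lt hl, hji]
        · have hgt : m < i.val := by omega
          have hji : j.val = i.val - 1 := by omega
          rw [pathTargets_toward_gt hgt, hji]
      have hmr' : j.val = m ∨ (rest ≠ [] ∧ ∀ y ∈ rest.getLast?, y.2.1.val = m) := by
        by_cases hjm : j.val = m
        · exact Or.inl hjm
        · exact Or.inr ⟨hrest_ne hjm, hmr⟩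
      obtain ⟨J'', hJ'', hs'', hd'', htg'', ha''⟩ := ih j (x.2.2 + 1) hJr hsr hdr hmr'
      refine ⟨x :: J'', ⟨?_, ?_⟩, ?_, ?_, ?_, ?_⟩
      · intro y hy
        rcases List.mem_cons.mp hy with rfl | hy
        · exact hadj
        · exact hJ''.1 y hy
      · exact List.isChain_cons.mpr ⟨fun y hy => ⟨hs'' y hy, hd'' y hy⟩, hJ''.2⟩
      · intro y hy; simp at hy; subst hy; exact hx1
      · intro y hy; simp at hy; subst hy; exact htx
      · simpa [hexp, hj] using htg''
      · rw [arrival_cons x J'' t, arrival_cons x rest t]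
        exact ha''
    case _ | _ =>
      -- away from m
      obtain ⟨h1, h2⟩ := haw
      have hjm : j.val ≠ m := by omega
      have hexp : pathTargets j.val m = i.val :: pathTargets i.val m := by
        rcases Nat.lt_or_ge j.val m with hl | hl
        · have hji : i.val = j.val + 1 := by omega
          rw [pathTargets_toward_lt hl, ← hji]
        · have hgt : m < j.val := by omega
          have hji : i.val = j.val - 1 := by omega
          rw [pathTargets_toward_gt hgt, ← hji]
      obtain ⟨J'', hJ'', hs'', hd'', htg'', ha''⟩ := ih j (x.2.2 + 1) hJr hsr hdr
        (Or.inr ⟨hrest_ne hjm, hmr⟩)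
      rw [hexp] at htg''
      cases J'' with
      | nil => simp at htg''
      | cons y J3 =>
        simp only [List.map_cons, List.cons.injEq] at htg''
        obtain ⟨hyv, htg3⟩ := htg''
        have hy1 : y.2.1 = i := Fin.val_injective hyv
        have hchain'' := List.isChain_cons.mp hJ''.2
        have hty : x.2.2 + 1 ≤ y.2.2 := hd'' y rfl
        have hJ3ne : J3 ≠ [] := by
          intro hnil
          rw [hnil] at htg3
          exact pathTargets_ne_nil him htg3.symm
        refine ⟨J3, ⟨fun z hz => hJ''.1 z (List.mem_cons_of_mem y hz), hchain''.2⟩,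
          ?_, ?_, htg3, ?_⟩
        · intro z hz
          rw [(hchain''.1 z hz).1, hy1]
        · intro z hz
          have := (hchain''.1 z hz).2
          omega
        · have e1 : arrival (x :: rest) t = arrival rest (x.2.2 + 1) := arrival_cons _ _ _
          have e2 : arrival (y :: J3) (x.2.2 + 1) = arrival J3 (y.2.2 + 1) :=
            arrival_cons _ _ _
          have e3 : arrival J3 t = arrival J3 (y.2.2 + 1) := arrival_indep hJ3ne _ _
          omega

/-! ### Building journeys along walks, and splitting lemmas -/

lemma build {V : Type} {𝒢 : TVG V}
    (hR : ∀ u v, 𝒢.G.Adj u v → ∀ t, ∃ t', t < t' ∧ 𝒢.avail u v t') :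
    ∀ L : List V, ∀ (i : V) (t : ℕ), List.Chain' 𝒢.G.Adj (i :: L) →
    ∃ J, 𝒢.IsJourney J ∧ startsAt J i ∧ departsAfter J t ∧
      J.map (fun x => x.2.1) = L := by
  intro L
  induction L with
  | nil => exact fun i t _ => ⟨[], ⟨by simp, List.isChain_nil⟩, by simp [startsAt],
      by simp [departsAfter], by simp⟩
  | cons v L' ih =>
    intro i t hc
    rcases List.isChain_cons_cons.mp hc with ⟨hadj, hc'⟩
    obtain ⟨t', ht', hav⟩ := hR i v hadj t
    obtain ⟨J', hJ', hs', hd', hm'⟩ := ih v (t' + 1) hc'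
    refine ⟨(i, v, t') :: J', ⟨?_, ?_⟩, ?_, ?_, by simp [hm']⟩
    · intro y hy
      rcases List.mem_cons.mp hy with rfl | hy
      · exact ⟨hadj, hav⟩
      · exact hJ'.1 y hy
    · exact List.isChain_cons.mpr ⟨fun y hy => ⟨hs' y hy, hd' y hy⟩, hJ'.2⟩
    · intro y hy; simp at hy; subst hy; rfl
    · intro y hy; simp at hy; subst hy; exact Nat.le_of_lt ht'

lemma split2 {α : Type} (P Q : α → Prop) :
    ∀ l : List α, (∃ x ∈ l, P x) → (∃ x ∈ l, Q x) →
    (∃ A x B, l = A ++ x :: B ∧ P x ∧ ∃ y ∈ x :: B, Q y) ∨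
    (∃ A x B, l = A ++ x :: B ∧ Q x ∧ ∃ y ∈ x :: B, P y) := by
  intro l
  induction l with
  | nil => rintro ⟨x, hx, -⟩; simp at hx
  | cons a l' ih =>
    rintro ⟨xp, hxp, hP⟩ ⟨xq, hxq, hQ⟩
    by_cases hPa : P a
    · exact Or.inl ⟨[], a, l', by simp, hPa, xq, hxq, hQ⟩
    by_cases hQa : Q a
    · exact Or.inr ⟨[], a, l', by simp, hQa, xp, hxp, hP⟩
    have hxp' : xp ∈ l' := by
      rcases List.mem_cons.mp hxp with rfl | h; · exact absurd hP hPa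
      · exact h
    have hxq' : xq ∈ l' := by
      rcases List.mem_cons.mp hxq with rfl | h; · exact absurd hQ hQa
      · exact h
    rcases ih ⟨xp, hxp', hP⟩ ⟨xq, hxq', hQ⟩ with ⟨A, x, B, hl, h1, h2⟩ | ⟨A, x, B, hl, h1, h2⟩
    · exact Or.inl ⟨a :: A, x, B, by rw [hl]; rfl, h1, h2⟩
    · exact Or.inr ⟨a :: A, x, B, by rw [hl]; rfl, h1, h2⟩

lemma last_target {V : Type} {J : List (Step V)} {l : List ℕ} {m : ℕ}
    {f : Step V → ℕ} (h : J.map f = l ++ [m]) :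
    ∃ P z, J = P ++ [z] ∧ f z = m := by
  rcases List.eq_nil_or_concat J with rfl | ⟨P, z, rfl⟩
  · exact absurd h.symm (by simp)
  · rw [List.concat_eq_append, List.map_append] at h
    have h2 := List.append_inj_right h (by simpa using congrArg List.length h)
    simp at h2
    exact ⟨P, z, List.concat_eq_append, h2⟩

/-! ### Sweep journeys extracted from a covering journey -/

lemma pathTargets_chain2 (i m m' : ℕ) :
    List.Chain' (fun a b : ℕ => a + 1 = b ∨ b + 1 = a)
      (i :: (pathTargets i m ++ pathTargets m m')) := by
  have h1 := pathTargets_chain ((m - i) + (i - m)) i m rfl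
  have h2 := pathTargets_chain ((m' - m) + (m - m')) m m' rfl
  have heq : i :: (pathTargets i m ++ pathTargets m m')
      = (i :: pathTargets i m) ++ pathTargets m m' := by simp
  rw [heq]
  refine List.IsChain.append h1 (List.isChain_cons.mp h2).2 ?_
  intro z hz w hw
  have hz' : z = m := by
    by_cases him : i = m
    · subst him
      simp at hz
      omega
    · obtain ⟨L, hL⟩ := pathTargets_concat him
      rw [hL, show i :: (L ++ [m]) = (i :: L) ++ [m] by simp,
        List.getLast?_concat] at hz
      simp at hz
      omega
  subst hz'
  exact (List.isChain_cons.mp h2).1 w hw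

open Fin.NatCast in
lemma chain_adj_cast {n : ℕ} {𝒢 : TVG (Fin (n + 1))}
    (hG : 𝒢.G = SimpleGraph.pathGraph (n + 1)) :
    ∀ l : List ℕ, (∀ x ∈ l, x < n + 1) →
    List.Chain' (fun a b : ℕ => a + 1 = b ∨ b + 1 = a) l →
    List.Chain' 𝒢.G.Adj (l.map fun i => ((i : ℕ) : Fin (n + 1))) := by
  intro l
  induction l with
  | nil => exact fun _ _ => List.isChain_nil
  | cons a l ih =>
    intro hl hc
    cases l with
    | nil => exact List.isChain_singleton _
    | cons b l' =>
      rw [List.map_cons, List.map_cons]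
      rcases List.isChain_cons_cons.mp hc with ⟨hab, hc'⟩
      refine List.isChain_cons_cons.mpr ⟨?_, ?_⟩
      · rw [hG]
        apply SimpleGraph.pathGraph_adj.mpr
        have ha := hl a (by simp)
        have hb := hl b (by simp)
        rw [Fin.val_natCast, Fin.val_natCast, Nat.mod_eq_of_lt ha, Nat.mod_eq_of_lt hb]
        exact hab
      · rw [← List.map_cons]
        exact ih (fun x hx => hl x (List.mem_cons_of_mem a hx)) hc'

lemma visits_of_targets {n : ℕ} {J : List (Step (Fin (n + 1)))} {k : Fin (n + 1)}
    {L : List ℕ} (hJ : J.map (fun z => z.2.1.val) = L) (v : Fin (n + 1))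
    (hv : v.val = k.val ∨ v.val ∈ L) : visits J k v := by
  rcases hv with h | h
  · exact Or.inl (Fin.val_injective h)
  · right
    rw [← hJ] at h
    obtain ⟨z, hz, hzv⟩ := List.mem_map.mp h
    exact ⟨z, hz, Fin.val_injective hzv⟩

lemma vertSeq_eq {n : ℕ} {J : List (Step (Fin (n + 1)))} {k : Fin (n + 1)} {L : List ℕ}
    (hJ : J.map (fun z => z.2.1.val) = L) {M : List (Fin (n + 1))}
    (hM : M.map Fin.val = k.val :: L) : vertSeq J k = M := by
  apply List.map_injective_iff.mpr Fin.val_injective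
  rw [hM, vertSeq, List.map_cons, List.map_map]
  rw [← hJ]
  rfl

lemma sweep1 {n : ℕ} {𝒢 : TVG (Fin (n + 1))} (hG : 𝒢.G = SimpleGraph.pathGraph (n + 1))
    {k : Fin (n + 1)} {C D : List (Step (Fin (n + 1)))} {y : Step (Fin (n + 1))}
    {m2 : ℕ} (hJ : 𝒢.IsJourney (C ++ y :: D)) (hs : startsAt (C ++ y :: D) k)
    (hy : y.2.1.val = m2) :
    ∃ J, 𝒢.IsJourney J ∧ startsAt J k ∧
      J.map (fun z => z.2.1.val) = pathTargets k.val m2 ∧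
      arrival J 0 ≤ arrival (C ++ y :: D) 0 := by
  have hJ1 := journey_of_infix hJ (⟨[], D, by simp⟩ : (C ++ [y]) <:+: (C ++ y :: D))
  have hs1 := startsAt_prefix (show C ++ y :: D = (C ++ [y]) ++ D by simp) (by simp) hs
  obtain ⟨J, h1, h2, h3, h4, h5⟩ := extract hG m2 (C ++ [y]) k 0 hJ1 hs1
    (fun _ _ => Nat.zero_le _)
    (Or.inr ⟨by simp, by simp [List.getLast?_concat, hy]⟩)
  refine ⟨J, h1, h2, h4, ?_⟩
  rw [arrival_concat] at h5
  have := step_le_arrival hJ.2 (show y ∈ C ++ y :: D by simp) 0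
  omega

lemma sweep2 {n : ℕ} {𝒢 : TVG (Fin (n + 1))} (hG : 𝒢.G = SimpleGraph.pathGraph (n + 1))
    {k : Fin (n + 1)} {A C D : List (Step (Fin (n + 1)))} {x y : Step (Fin (n + 1))}
    {m1 m2 : ℕ} (hm : m1 ≠ m2)
    (hJ : 𝒢.IsJourney (A ++ x :: (C ++ y :: D)))
    (hs : startsAt (A ++ x :: (C ++ y :: D)) k)
    (hx : x.2.1.val = m1) (hy : y.2.1.val = m2) :
    ∃ J, 𝒢.IsJourney J ∧ startsAt J k ∧
      J.map (fun z => z.2.1.val) = pathTargets k.val m1 ++ pathTargets m1 m2 ∧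
      arrival J 0 ≤ arrival (A ++ x :: (C ++ y :: D)) 0 := by
  have hJ1 := journey_of_infix hJ
    (⟨[], C ++ y :: D, by simp⟩ : (A ++ [x]) <:+: (A ++ x :: (C ++ y :: D)))
  have hs1 := startsAt_prefix
    (show A ++ x :: (C ++ y :: D) = (A ++ [x]) ++ (C ++ y :: D) by simp) (by simp) hs
  obtain ⟨J1, j1J, j1s, j1d, j1t, j1a⟩ := extract hG m1 (A ++ [x]) k 0 hJ1 hs1
    (fun _ _ => Nat.zero_le _)
    (Or.inr ⟨by simp, by simp [List.getLast?_concat, hx]⟩)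
  rw [arrival_concat] at j1a
  obtain ⟨hJB, hsB, hdB⟩ := suffix_journey (A := A) (x := x) (B := C ++ y :: D) hJ
  have hJ2' := journey_of_infix hJB (⟨[], D, by simp⟩ : (C ++ [y]) <:+: (C ++ y :: D))
  have hs2 := startsAt_prefix (show C ++ y :: D = (C ++ [y]) ++ D by simp) (by simp) hsB
  have hd2 := departsAfter_prefix (show C ++ y :: D = (C ++ [y]) ++ D by simp) (by simp) hdB
  obtain ⟨J2, j2J, j2s, j2d, j2t, j2a⟩ := extract hG m2 (C ++ [y]) x.2.1 (x.2.2 + 1)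
    hJ2' hs2 hd2 (Or.inr ⟨by simp, by simp [List.getLast?_concat, hy]⟩)
  rw [hx] at j2t
  rw [arrival_concat] at j2a
  have hJ2ne : J2 ≠ [] := by
    intro hnil
    rw [hnil] at j2t
    exact pathTargets_ne_nil hm (by simpa using j2t.symm)
  refine ⟨J1 ++ J2, ⟨?_, ?_⟩, ?_, ?_, ?_⟩
  · intro z hz
    rcases List.mem_append.mp hz with h | h
    · exact j1J.1 z h
    · exact j2J.1 z h
  · refine List.IsChain.append j1J.2 j2J.2 ?_
    intro z hz w hw
    have hJ1ne : J1 ≠ [] := by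
      intro hnil; rw [hnil] at hz; simp at hz
    have hk1 : k.val ≠ m1 := by
      intro he
      rw [he, pathTargets_self] at j1t
      exact hJ1ne (List.map_eq_nil_iff.mp j1t)
    obtain ⟨L0, hL0⟩ := pathTargets_concat hk1
    obtain ⟨P, zl, hP, hzl⟩ := last_target (J := J1) (l := L0) (m := m1)
      (f := fun z => z.2.1.val) (by rw [j1t, hL0])
    rw [hP, List.getLast?_concat] at hz
    simp only [Option.mem_some_iff] at hz
    subst hz
    refine ⟨?_, ?_⟩
    · rw [j2s w hw]
      exact (Fin.val_injective (by rw [hzl, hx])).symm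
    · have hzt : zl.2.2 + 1 = arrival J1 0 := (arrival_concat P zl 0).symm ▸ by
        rw [hP, arrival_concat]
      have hwt := j2d w hw
      omega
  · intro w hw
    cases J1 with
    | nil =>
      have hk1 : k.val = m1 := by
        by_contra hne
        exact pathTargets_ne_nil hne (by simpa using j1t.symm)
      rw [List.nil_append] at hw
      rw [j2s w hw]
      exact (Fin.val_injective (by rw [hx, hk1])).symm
    | cons z J1' =>
      apply j1s
      simpa using hw
  · rw [List.map_append, j1t, j2t]
  · rw [arrival, List.getLast?_append_of_ne_nil J1 hJ2ne]
    have e1 : arrival (J1 ++ J2) 0 = arrival J2 0 := by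
      rw [arrival, arrival, List.getLast?_append_of_ne_nil J1 hJ2ne]
    rw [← List.getLast?_append_of_ne_nil J1 hJ2ne, ← arrival]
    rw [e1, arrival_indep hJ2ne 0 (x.2.2 + 1)]
    have hyJ := step_le_arrival hJ.2 (show y ∈ A ++ x :: (C ++ y :: D) by simp) 0
    omega

/-! ### Computing the two sweep walks -/

open Fin.NatCast in
lemma map_val_cast {n : ℕ} {L : List ℕ} (hL : ∀ x ∈ L, x < n + 1) :
    ((L.map fun i => ((i : ℕ) : Fin (n + 1))).map Fin.val) = L := by
  rw [List.map_map]
  conv_rhs => rw [← List.map_id L]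
  apply List.map_congr_left
  intro x hx
  simp [Fin.val_natCast, Nat.mod_eq_of_lt (hL x hx)]

lemma leftFirst_val (n k : ℕ) (hk : k ≤ n) :
    (leftFirst n k).map Fin.val = k :: (pathTargets k 0 ++ pathTargets 0 n) := by
  unfold leftFirst
  rw [map_val_cast ?_]
  · have e1 : (List.range (k + 1)).reverse = k :: pathTargets k 0 := by
      rw [List.range_succ, List.reverse_append]
      simp only [List.reverse_cons, List.reverse_nil, List.nil_append,
        List.singleton_append, List.cons.injEq, true_and]
      rcases Nat.eq_zero_or_pos k with rfl | hkpos
      · simp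
      · unfold pathTargets
        rw [if_neg (by omega)]
        simp
    have e2 : (List.range n).map (· + 1) = pathTargets 0 n := by
      unfold pathTargets
      rw [if_pos (Nat.zero_le n)]
      simp
    rw [e1, e2, List.cons_append]
  · intro x hx
    rcases List.mem_append.mp hx with h | h
    · simp at h; omega
    · simp at h; omega

lemma rightFirst_val (n k : ℕ) (hk : k ≤ n) :
    (rightFirst n k).map Fin.val = k :: (pathTargets k n ++ pathTargets n 0) := by
  unfold rightFirst
  rw [map_val_cast ?_]
  · have e1 : (List.range (n - k + 1)).map (· + k) = k :: pathTargets k n := by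
      rw [List.range_succ_eq_map, List.map_cons, List.map_map]
      unfold pathTargets
      rw [if_pos hk]
      refine List.cons_eq_cons.mpr ⟨by omega, List.map_congr_left fun a _ => ?_⟩
      simp only [Function.comp_apply]
      omega
    have e2 : (List.range n).reverse = pathTargets n 0 := by
      rcases Nat.eq_zero_or_pos n with rfl | hn
      · simp
      · unfold pathTargets
        rw [if_neg (by omega)]
        simp
    rw [e1, e2, List.cons_append]
  · intro x hx
    rcases List.mem_append.mp hx with h | h
    · simp at h; omega
    · simp at h; omega

end Aux

end AuxProofs

open Aux in
/-- For a TVG of class `R` whose underlying graph is the path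
`v_0 v_1 … v_n`, with the agent starting at `v_k` at time `0`, some optimal solution to
DMVP has as underlying walk one of the two monotone sweeps (first to `v_0` then to
`v_n`, or first to `v_n` then to `v_0`). -/
theorem dmvp_path_two_sweeps (n : ℕ) (𝒢 : TVG (Fin (n + 1)))
    (hG : 𝒢.G = SimpleGraph.pathGraph (n + 1)) (hR : 𝒢.ClassR) (k : Fin (n + 1)) :
    ∃ J, 𝒢.IsCoveringFrom J k ∧
      (∀ J', 𝒢.IsCoveringFrom J' k → arrival J 0 ≤ arrival J' 0) ∧
      (vertSeq J k = leftFirst n k.val ∨ vertSeq J k = rightFirst n k.val) := by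
  classical
  obtain ⟨hconn, hrec⟩ := hR
  have hkn : k.val ≤ n := Nat.lt_succ_iff.mp k.isLt
  -- existence of a covering journey
  have hex : ∃ a : ℕ, ∃ J0, 𝒢.IsCoveringFrom J0 k ∧ arrival J0 0 = a := by
    have hbound : ∀ x ∈ pathTargets k.val 0 ++ pathTargets 0 n, x < n + 1 := by
      intro x hx
      rcases List.mem_append.mp hx with h | h
      · exact pathTargets_lt_of_le hkn (Nat.zero_le n) h
      · exact pathTargets_lt_of_le (Nat.zero_le n) (le_refl n) h
    have hchainF := chain_adj_cast hG (k.val :: (pathTargets k.val 0 ++ pathTargets 0 n))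
      (by
        intro x hx
        rcases List.mem_cons.mp hx with rfl | hx
        · omega
        · exact hbound x hx)
      (pathTargets_chain2 k.val 0 n)
    rw [List.map_cons, Fin.cast_val_eq_self] at hchainF
    open Fin.NatCast in
    obtain ⟨J0, hJ0, hs0, hd0, ht0⟩ := build hrec
      ((pathTargets k.val 0 ++ pathTargets 0 n).map fun i => ((i : ℕ) : Fin (n + 1)))
      k 0 hchainF
    have ht0' : J0.map (fun z => z.2.1.val) = pathTargets k.val 0 ++ pathTargets 0 n := by
      have h := congrArg (List.map Fin.val) ht0
      rw [List.map_map, map_val_cast hbound] at h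
      exact h
    refine ⟨arrival J0 0, J0, ⟨hJ0, hs0, ?_⟩, rfl⟩
    intro v
    have hvn : v.val ≤ n := Nat.lt_succ_iff.mp v.isLt
    apply visits_of_targets ht0' v
    by_cases hvk : v.val = k.val
    · exact Or.inl hvk
    · right
      apply List.mem_append.mpr
      rcases Nat.eq_zero_or_pos v.val with hv0 | hv0
      · exact Or.inl (mem_pathTargets.mpr (by omega))
      · exact Or.inr (mem_pathTargets.mpr (by omega))
  obtain ⟨J'', hc'', ha''⟩ := Nat.find_spec hex
  have hmin : ∀ J', 𝒢.IsCoveringFrom J' k → Nat.find hex ≤ arrival J' 0 :=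
    fun J' h => Nat.find_min' hex ⟨J', h, rfl⟩
  obtain ⟨hJ'', hs'', hcov''⟩ := hc''
  rcases Nat.eq_zero_or_pos n with hn0 | hn1
  · -- n = 0 : the empty journey
    subst hn0
    refine ⟨[], ⟨⟨by simp, List.isChain_nil⟩, by simp [startsAt], fun v => Or.inl (Fin.ext (by omega))⟩,
      fun J' _ => by simp [arrival], ?_⟩
    left
    apply vertSeq_eq (L := []) (by simp)
    have hk0 : k.val = 0 := by omega
    rw [leftFirst_val 0 k.val hkn, hk0]
    simp
  -- n ≥ 1
  have finishL : ∀ J, 𝒢.IsJourney J → startsAt J k →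
      J.map (fun z => z.2.1.val) = pathTargets k.val 0 ++ pathTargets 0 n →
      arrival J 0 ≤ arrival J'' 0 →
      ∃ J, 𝒢.IsCoveringFrom J k ∧
        (∀ J', 𝒢.IsCoveringFrom J' k → arrival J 0 ≤ arrival J' 0) ∧
        (vertSeq J k = leftFirst n k.val ∨ vertSeq J k = rightFirst n k.val) := by
    intro J h1 h2 h3 h4
    refine ⟨J, ⟨h1, h2, ?_⟩, ?_, Or.inl (vertSeq_eq h3 (leftFirst_val n k.val hkn))⟩
    · intro v
      have hvn : v.val ≤ n := Nat.lt_succ_iff.mp v.isLt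
      apply visits_of_targets h3 v
      by_cases hvk : v.val = k.val
      · exact Or.inl hvk
      · right
        apply List.mem_append.mpr
        rcases Nat.eq_zero_or_pos v.val with hv0 | hv0
        · exact Or.inl (mem_pathTargets.mpr (by omega))
        · exact Or.inr (mem_pathTargets.mpr (by omega))
    · intro J' hJ'
      calc arrival J 0 ≤ arrival J'' 0 := h4
        _ = Nat.find hex := ha''
        _ ≤ arrival J' 0 := hmin J' hJ'
  have finishR : ∀ J, 𝒢.IsJourney J → startsAt J k →
      J.map (fun z => z.2.1.val) = pathTargets k.val n ++ pathTargets n 0 →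
      arrival J 0 ≤ arrival J'' 0 →
      ∃ J, 𝒢.IsCoveringFrom J k ∧
        (∀ J', 𝒢.IsCoveringFrom J' k → arrival J 0 ≤ arrival J' 0) ∧
        (vertSeq J k = leftFirst n k.val ∨ vertSeq J k = rightFirst n k.val) := by
    intro J h1 h2 h3 h4
    refine ⟨J, ⟨h1, h2, ?_⟩, ?_, Or.inr (vertSeq_eq h3 (rightFirst_val n k.val hkn))⟩
    · intro v
      have hvn : v.val ≤ n := Nat.lt_succ_iff.mp v.isLt
      apply visits_of_targets h3 v
      by_cases hvk : v.val = k.val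
      · exact Or.inl hvk
      · right
        apply List.mem_append.mpr
        rcases Nat.lt_or_ge v.val n with hv0 | hv0
        · exact Or.inr (mem_pathTargets.mpr (by omega))
        · exact Or.inl (mem_pathTargets.mpr (by omega))
    · intro J' hJ'
      calc arrival J 0 ≤ arrival J'' 0 := h4
        _ = Nat.find hex := ha''
        _ ≤ arrival J' 0 := hmin J' hJ'
  have hv0 := hcov'' ⟨0, by omega⟩
  have hvn := hcov'' ⟨n, by omega⟩
  by_cases hk0 : k.val = 0
  · -- start at the left end : single sweep to the right
    rcases hvn with hvk | ⟨y, hyJ, hyv⟩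
    · exfalso
      have := congrArg Fin.val hvk
      simp at this
      omega
    · obtain ⟨C, D, hCD⟩ := List.append_of_mem hyJ
      rw [hCD] at hJ'' hs''
      obtain ⟨J, h1, h2, h3, h4⟩ := sweep1 hG hJ'' hs'' (show y.2.1.val = n by rw [hyv])
      refine finishL J h1 h2 ?_ (by rw [hCD]; exact h4)
      rw [h3, hk0]
      simp
  by_cases hkn' : k.val = n
  · -- start at the right end : single sweep to the left
    rcases hv0 with hvk | ⟨y, hyJ, hyv⟩
    · exfalso
      have := congrArg Fin.val hvk
      simp at this
      omega
    · obtain ⟨C, D, hCD⟩ := List.append_of_mem hyJ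
      rw [hCD] at hJ'' hs''
      obtain ⟨J, h1, h2, h3, h4⟩ := sweep1 hG hJ'' hs'' (show y.2.1.val = 0 by rw [hyv])
      refine finishR J h1 h2 ?_ (by rw [hCD]; exact h4)
      rw [h3, hkn']
      simp
  -- interior start
  have h0step : ∃ z ∈ J'', z.2.1.val = 0 := by
    rcases hv0 with hvk | ⟨z, hz, hzv⟩
    · exfalso
      have := congrArg Fin.val hvk
      simp at this
      omega
    · exact ⟨z, hz, by rw [hzv]⟩
  have hnstep : ∃ z ∈ J'', z.2.1.val = n := by
    rcases hvn with hvk | ⟨z, hz, hzv⟩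
    · exfalso
      have := congrArg Fin.val hvk
      simp at this
      omega
    · exact ⟨z, hz, by rw [hzv]⟩
  rcases split2 (fun z => z.2.1.val = 0) (fun z => z.2.1.val = n) J'' h0step hnstep with
    ⟨A, x, B, hl, hx0, y, hyB, hyn⟩ | ⟨A, x, B, hl, hxn, y, hyB, hy0⟩
  · -- reaches 0 first, then n : left sweep
    have hyB' : y ∈ B := by
      rcases List.mem_cons.mp hyB with rfl | h
      · omega
      · exact h
    obtain ⟨C, D, hCD⟩ := List.append_of_mem hyB'
    rw [hCD] at hl
    rw [hl] at hJ'' hs''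
    obtain ⟨J, h1, h2, h3, h4⟩ := sweep2 hG (show (0 : ℕ) ≠ n by omega) hJ'' hs'' hx0 hyn
    exact finishL J h1 h2 h3 (by rw [hl]; exact h4)
  · -- reaches n first, then 0 : right sweep
    have hyB' : y ∈ B := by
      rcases List.mem_cons.mp hyB with rfl | h
      · omega
      · exact h
    obtain ⟨C, D, hCD⟩ := List.append_of_mem hyB'
    rw [hCD] at hl
    rw [hl] at hJ'' hs''
    obtain ⟨J, h1, h2, h3, h4⟩ := sweep2 hG (show (n : ℕ) ≠ 0 by omega) hJ'' hs'' hxn hy0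
    exact finishR J h1 h2 h3 (by rw [hl]; exact h4)
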